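/- (DAPO decomposition.) Let Ω, r, p, μ⁺, μ⁻, μ, A, ρ be as in the mixture setup, assume the length function o ↦ (ρ o).length is μ-integrable and set L = ∫ (ρ o).length dμ(o) (so L ≥ 1). Let ε_low, ε_high ≥ 0. Define s⁺(o) = (1/L)·Σ_{x ∈ ρ o} min(x, 1+ε_high), s⁻(o) = (1/L)·Σ_{x ∈ ρ o} max(x, 1−ε_low), and G(o) = (1/L)·Σ_{x ∈ ρ o} min(x·A(o), clip(x, 1−ε_low, 1+ε_high)·A(o)). If G is μ-integrable, s⁺ is μ⁺-integrable and s⁻ is μ⁻-integrable, then ∫ G dμ = √(p(1−p)) · ( ∫ s⁺ dμ⁺ − ∫ s⁻ dμ⁻ ). -/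

import Mathlib

open MeasureTheory

/-- The clipping operator used in PPO-style RL objectives. -/
noncomputable def clip (x a b : ℝ) : ℝ := max a (min x b)

lemma min_clip (x a b : ℝ) (hab : a ≤ b) : min x (clip x a b) = min x b := by
  unfold clip
  rcases le_total x b with h | h
  · rw [min_eq_left h, min_eq_left (le_max_right a x)]
  · rw [min_eq_right h, max_eq_right hab, min_eq_right h]

lemma max_clip (x a b : ℝ) (hab : a ≤ b) : max x (clip x a b) = max x a := by
  unfold clip
  rcases le_total x a with h | h
  · rw [min_eq_left (h.trans hab), max_comm a x, max_eq_right (le_max_left x a),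
      max_eq_right h]
  · rw [max_eq_left (max_le h (min_le_left x b)), max_eq_left h]

lemma min_mul_pos (x y c : ℝ) (hc : 0 < c) : min (x * c) (y * c) = min x y * c := by
  rcases le_total x y with h | h
  · rw [min_eq_left h, min_eq_left (by nlinarith)]
  · rw [min_eq_right h, min_eq_right (by nlinarith)]

lemma min_mul_neg (x y c : ℝ) (hc : c < 0) : min (x * c) (y * c) = max x y * c := by
  rcases le_total x y with h | h
  · rw [max_eq_right h, min_eq_right (by nlinarith)]
  · rw [max_eq_left h, min_eq_left (by nlinarith)]

lemma sum_map_mul (l : List ℝ) (c : ℝ) (f : ℝ → ℝ) :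
    (l.map (fun x => f x * c)).sum = (l.map f).sum * c := by
  induction l with
  | nil => simp
  | cons a t ih => simp [ih]; ring

theorem stmt_9 {Ω : Type*} [MeasurableSpace Ω]
    (r : Ω → Bool) (hr : Measurable r)
    (p : ℝ) (hp : p ∈ Set.Ioo (0 : ℝ) 1)
    (μpos μneg : Measure Ω) [IsProbabilityMeasure μpos] [IsProbabilityMeasure μneg]
    (hpos : μpos {o | r o = true} = 1) (hneg : μneg {o | r o = false} = 1)
    (μ : Measure Ω)
    (hμ : μ = ENNReal.ofReal p • μpos + ENNReal.ofReal (1 - p) • μneg)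
    (A : Ω → ℝ)
    (hA : ∀ o, A o = if r o then Real.sqrt ((1 - p) / p) else -Real.sqrt (p / (1 - p)))
    (ρ : Ω → List ℝ) (hρ : ∀ o, ρ o ≠ [])
    (hlen : Integrable (fun o => ((ρ o).length : ℝ)) μ)
    (L : ℝ) (hL : L = ∫ o, ((ρ o).length : ℝ) ∂μ)
    (εlow εhigh : ℝ) (hεlow : 0 ≤ εlow) (hεhigh : 0 ≤ εhigh)
    (sp sm G : Ω → ℝ)
    (hsp : ∀ o, sp o = (1 / L) * ((ρ o).map (fun x => min x (1 + εhigh))).sum)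
    (hsm : ∀ o, sm o = (1 / L) * ((ρ o).map (fun x => max x (1 - εlow))).sum)
    (hG : ∀ o, G o = (1 / L) *
      ((ρ o).map (fun x => min (x * A o) (clip x (1 - εlow) (1 + εhigh) * A o))).sum)
    (hGint : Integrable G μ) (hspint : Integrable sp μpos) (hsmint : Integrable sm μneg) :
    ∫ o, G o ∂μ =
      Real.sqrt (p * (1 - p)) * ((∫ o, sp o ∂μpos) - ∫ o, sm o ∂μneg) := by
  obtain ⟨hp0, hp1⟩ := hp
  have hab : (1 : ℝ) - εlow ≤ 1 + εhigh := by linarith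
  have hcpos : 0 < Real.sqrt ((1 - p) / p) :=
    Real.sqrt_pos.2 (div_pos (by linarith) hp0)
  have hcneg : 0 < Real.sqrt (p / (1 - p)) :=
    Real.sqrt_pos.2 (div_pos hp0 (by linarith))
  -- pointwise identities on the two events
  have hGpos : ∀ o, r o = true → G o = Real.sqrt ((1 - p) / p) * sp o := by
    intro o ho
    rw [hG, hsp]
    have hAo : A o = Real.sqrt ((1 - p) / p) := by rw [hA, ho]; simp
    have : ∀ x : ℝ, min (x * A o) (clip x (1 - εlow) (1 + εhigh) * A o)
        = min x (1 + εhigh) * A o := by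
      intro x
      rw [hAo, min_mul_pos _ _ _ hcpos, min_clip _ _ _ hab]
    simp only [this]
    rw [sum_map_mul, hAo]; ring
  have hGneg : ∀ o, r o = false → G o = -Real.sqrt (p / (1 - p)) * sm o := by
    intro o ho
    rw [hG, hsm]
    have hAo : A o = -Real.sqrt (p / (1 - p)) := by rw [hA, ho]; simp
    have : ∀ x : ℝ, min (x * A o) (clip x (1 - εlow) (1 + εhigh) * A o)
        = max x (1 - εlow) * A o := by
      intro x
      rw [hAo, min_mul_neg _ _ _ (by linarith), max_clip _ _ _ hab]
    simp only [this]
    rw [sum_map_mul, hAo]; ring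
  -- a.e. statements
  have hmeas_pos : MeasurableSet {o | r o = true} := hr (by simp : MeasurableSet {true})
  have hmeas_neg : MeasurableSet {o | r o = false} := hr (by simp : MeasurableSet {false})
  have haepos : ∀ᵐ o ∂μpos, r o = true := by
    rw [ae_iff]
    have : {o | ¬ r o = true} = {o | r o = true}ᶜ := rfl
    rw [this, measure_compl hmeas_pos (measure_ne_top _ _), hpos, measure_univ]
    simp
  have haeneg : ∀ᵐ o ∂μneg, r o = false := by
    rw [ae_iff]
    have : {o | ¬ r o = false} = {o | r o = false}ᶜ := rfl
    rw [this, measure_compl hmeas_neg (measure_ne_top _ _), hneg, measure_univ]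
    simp
  have hIpos : ∫ o, G o ∂μpos = Real.sqrt ((1 - p) / p) * ∫ o, sp o ∂μpos := by
    rw [← integral_const_mul]
    exact integral_congr_ae (haepos.mono fun o ho => hGpos o ho)
  have hIneg : ∫ o, G o ∂μneg = -Real.sqrt (p / (1 - p)) * ∫ o, sm o ∂μneg := by
    rw [← integral_const_mul]
    exact integral_congr_ae (haeneg.mono fun o ho => hGneg o ho)
  -- split the integral over the mixture
  rw [hμ] at hGint ⊢
  have h1 : Integrable G (ENNReal.ofReal p • μpos) := (integrable_add_measure.mp hGint).1
  have h2 : Integrable G (ENNReal.ofReal (1 - p) • μneg) := (integrable_add_measure.mp hGint).2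
  rw [integral_add_measure h1 h2, integral_smul_measure, integral_smul_measure,
    ENNReal.toReal_ofReal hp0.le, ENNReal.toReal_ofReal (by linarith), hIpos, hIneg]
  have hs1 : Real.sqrt p * Real.sqrt p = p := Real.mul_self_sqrt hp0.le
  have hs2 : Real.sqrt (1 - p) * Real.sqrt (1 - p) = 1 - p :=
    Real.mul_self_sqrt (by linarith)
  have hsp0 : Real.sqrt p ≠ 0 := (Real.sqrt_pos.2 hp0).ne'
  have hsq0 : Real.sqrt (1 - p) ≠ 0 := (Real.sqrt_pos.2 (by linarith : (0:ℝ) < 1 - p)).ne'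
  have e1 : p * Real.sqrt ((1 - p) / p) = Real.sqrt (p * (1 - p)) := by
    rw [Real.sqrt_div (by linarith : (0:ℝ) ≤ 1 - p) p, Real.sqrt_mul hp0.le]
    field_simp
    linear_combination -hs1
  have e2 : (1 - p) * Real.sqrt (p / (1 - p)) = Real.sqrt (p * (1 - p)) := by
    rw [Real.sqrt_div hp0.le (1 - p), Real.sqrt_mul hp0.le]
    field_simp
    linear_combination -hs2
  simp only [smul_eq_mul]
  linear_combination (∫ o, sp o ∂μpos) * e1 - (∫ o, sm o ∂μneg) * e2
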